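/- For the Hatano-Nelson model with open boundary conditions and |J_s| > |g|, the matrix H_o with super-diagonal entries J_s + g and sub-diagonal entries J_s − g is similar via the diagonal matrix S = diag(r, r², ..., r^N) with r = √(|J_s − g|/|J_s + g|) to a real symmetric tridiagonal matrix with off-diagonal entries sgn(J_s)√(J_s² − g²); hence all eigenvalues of H_o are real and equal 2 sgn(J_s) √(J_s² − g²) cos(mπ/(N+1)) for m = 1,...,N. -/

import Mathlib

open Matrix

lemma hn_mem_spec_iff_root {N : ℕ} (A : Matrix (Fin N) (Fin N) ℂ) (μ : ℂ) :
    μ ∈ spectrum ℂ A ↔ A.charpoly.IsRoot μ := by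
  rw [spectrum.mem_iff, Polynomial.IsRoot, Matrix.charpoly, eval_det,
    matPolyEquiv_charmatrix, Polynomial.eval_sub, Polynomial.eval_X, Polynomial.eval_C]
  rw [Matrix.isUnit_iff_isUnit_det, isUnit_iff_ne_zero, not_ne_iff]
  congr! 2


lemma hn_tridiag_mem (N : ℕ) (c : ℝ) (m : ℕ) (hm1 : 1 ≤ m) (hmN : m ≤ N) :
    ((2 * c * Real.cos (m * Real.pi / (N + 1)) : ℝ) : ℂ) ∈ spectrum ℂ
      (Matrix.of (fun i j : Fin N =>
        if (j : ℕ) = (i : ℕ) + 1 ∨ (i : ℕ) = (j : ℕ) + 1 then (c : ℂ) else 0)) := by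
  set T := Matrix.of (fun i j : Fin N =>
        if (j : ℕ) = (i : ℕ) + 1 ∨ (i : ℕ) = (j : ℕ) + 1 then (c : ℂ) else 0) with hT
  set θ : ℝ := m * Real.pi / (N + 1) with hθ
  set W : ℕ → ℂ := fun k => ((Real.sin (k * θ) : ℝ) : ℂ) with hW
  set v : Fin N → ℂ := fun j => W ((j : ℕ) + 1) with hv
  have hN1 : (0:ℝ) < (N:ℝ) + 1 := by positivity
  have hW0 : W 0 = 0 := by simp [hW]
  have hWN : W (N + 1) = 0 := by
    have h1 : ((N+1 : ℕ):ℝ) * θ = m * Real.pi := by push_cast; rw [hθ]; field_simp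
    simp only [hW, h1, Real.sin_nat_mul_pi, Complex.ofReal_zero]
  have htrig : ∀ k : ℕ, W k + W (k + 2) = 2 * (Real.cos θ : ℂ) * W (k + 1) := by
    intro k
    have base : ∀ x t : ℝ, Real.sin (x - t) + Real.sin (x + t) = 2 * Real.cos t * Real.sin x := by
      intro x t; rw [Real.sin_add, Real.sin_sub]; ring
    have hre : Real.sin ((k:ℕ) * θ) + Real.sin ((k+2 : ℕ) * θ)
        = 2 * Real.cos θ * Real.sin ((k+1 : ℕ) * θ) := by
      push_cast
      rw [show (k:ℝ) * θ = ((k:ℝ)+1)*θ - θ by ring, show ((k:ℝ)+2) * θ = ((k:ℝ)+1)*θ + θ by ring]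
      exact base (((k:ℝ)+1) * θ) θ
    simp only [hW]
    exact_mod_cast congrArg Complex.ofReal hre
  have hθpos : 0 < θ := by
    rw [hθ]
    exact div_pos (mul_pos (by exact_mod_cast hm1) Real.pi_pos) hN1
  have hθlt : θ < Real.pi := by
    rw [hθ, div_lt_iff₀ hN1]
    have : (m:ℝ) < (N:ℝ) + 1 := by exact_mod_cast Nat.lt_succ_of_le hmN
    nlinarith [Real.pi_pos]
  have hsinpos := Real.sin_pos_of_pos_of_lt_pi hθpos hθlt
  have hv0 : v ≠ 0 := by
    intro h0
    have h00 : v ⟨0, by omega⟩ = 0 := by rw [h0]; rfl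
    simp only [hv, hW] at h00
    rw [Complex.ofReal_eq_zero] at h00
    norm_num at h00
    linarith
  have sumhelp : ∀ (x : ℂ) (k : ℕ), (∑ j : Fin N, if (j:ℕ) = k then x else 0)
      = if k < N then x else 0 := by
    intro x k
    by_cases hk : k < N
    · rw [if_pos hk, Finset.sum_eq_single (⟨k, hk⟩ : Fin N)]
      · simp
      · intro b _ hb
        rw [if_neg]
        intro hbk
        exact hb (Fin.ext hbk)
      · simp
    · rw [if_neg hk]
      apply Finset.sum_eq_zero
      intro j _
      rw [if_neg]
      omega
  have hmul : ∀ i : Fin N, (T.mulVec v) i = c * (W (i:ℕ) + W ((i:ℕ)+2)) := by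
    intro i
    simp only [Matrix.mulVec, dotProduct]
    have step : ∀ j : Fin N, T i j * v j =
        (if (j:ℕ) = (i:ℕ)+1 then (c:ℂ) * W ((i:ℕ)+2) else 0)
        + (if (j:ℕ)+1 = (i:ℕ) then (c:ℂ) * W (i:ℕ) else 0) := by
      intro j
      simp only [hT, Matrix.of_apply, hv]
      by_cases h1 : (j:ℕ) = (i:ℕ)+1
      · have h2 : ¬((j:ℕ)+1 = (i:ℕ)) := by omega
        rw [if_pos (Or.inl h1), if_pos h1, if_neg h2, add_zero, h1]
      · by_cases h2 : (j:ℕ)+1 = (i:ℕ)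
        · rw [if_pos (Or.inr h2.symm), if_neg h1, if_pos h2, zero_add, h2]
        · rw [if_neg (by omega), if_neg h1, if_neg h2, zero_mul, add_zero]
    rw [Finset.sum_congr rfl (fun j _ => step j), Finset.sum_add_distrib]
    have sum1 : (∑ j : Fin N, if (j:ℕ) = (i:ℕ)+1 then (c:ℂ) * W ((i:ℕ)+2) else 0)
        = c * W ((i:ℕ)+2) := by
      rw [sumhelp]
      by_cases hi : (i:ℕ)+1 < N
      · rw [if_pos hi]
      · rw [if_neg hi, show (i:ℕ)+2 = N+1 by omega, hWN, mul_zero]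
    have sum2 : (∑ j : Fin N, if (j:ℕ)+1 = (i:ℕ) then (c:ℂ) * W (i:ℕ) else 0)
        = c * W (i:ℕ) := by
      by_cases hi : (i:ℕ) = 0
      · rw [hi, hW0, mul_zero]
        apply Finset.sum_eq_zero
        intro j _
        rw [if_neg (by omega)]
      · simp only [show ∀ j : Fin N, ((j:ℕ)+1 = (i:ℕ)) ↔ ((j:ℕ) = (i:ℕ)-1) from fun j => by omega]
        rw [sumhelp, if_pos (by omega)]
    rw [sum1, sum2]
    ring
  have heig : T.mulVec v = (((2 * c * Real.cos θ : ℝ) : ℂ)) • v := by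
    funext i
    rw [hmul i]
    simp only [Pi.smul_apply, smul_eq_mul, hv]
    rw [htrig (i:ℕ)]
    push_cast
    ring
  rw [spectrum.mem_iff]
  intro hU
  rw [Matrix.isUnit_iff_isUnit_det, isUnit_iff_ne_zero] at hU
  apply hU
  rw [← Matrix.exists_mulVec_eq_zero_iff]
  refine ⟨v, hv0, ?_⟩
  rw [Matrix.sub_mulVec, heig]
  simp [Algebra.algebraMap_eq_smul_one, Matrix.smul_mulVec, Matrix.one_mulVec]


lemma hn_tridiag_spectrum (N : ℕ) (c : ℝ) (hc0 : c ≠ 0) :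
    spectrum ℂ (Matrix.of (fun i j : Fin N =>
        if (j : ℕ) = (i : ℕ) + 1 ∨ (i : ℕ) = (j : ℕ) + 1 then (c : ℂ) else 0))
      = (fun m : ℕ => ((2 * c * Real.cos (m * Real.pi / (N + 1)) : ℝ) : ℂ))
        '' Set.Icc 1 N := by
  set T := Matrix.of (fun i j : Fin N =>
        if (j : ℕ) = (i : ℕ) + 1 ∨ (i : ℕ) = (j : ℕ) + 1 then (c : ℂ) else 0) with hT
  have hmem : ∀ m : ℕ, m ∈ Set.Icc 1 N →
      ((2 * c * Real.cos (m * Real.pi / (N + 1)) : ℝ) : ℂ) ∈ spectrum ℂ T :=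
    fun m hm => hn_tridiag_mem N c m hm.1 hm.2
  have specroot : ∀ μ : ℂ, μ ∈ spectrum ℂ T ↔ T.charpoly.IsRoot μ :=
    fun μ => hn_mem_spec_iff_root T μ
  show spectrum ℂ T = (fun m : ℕ => ((2 * c * Real.cos (m * Real.pi / (N + 1)) : ℝ) : ℂ))
        '' Set.Icc 1 N
  set f : ℕ → ℂ := fun m => ((2 * c * Real.cos (m * Real.pi / (N + 1)) : ℝ) : ℂ) with hf
  have hN1 : (0:ℝ) < (N:ℝ) + 1 := by positivity
  have hbound : ∀ m : ℕ, m ≤ N → (m : ℝ) * Real.pi / ((N:ℝ) + 1) ∈ Set.Icc 0 Real.pi := by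
    intro m hm
    constructor
    · positivity
    · rw [div_le_iff₀ hN1]
      have h1 : (m:ℝ) ≤ (N:ℝ) := by exact_mod_cast hm
      nlinarith [Real.pi_pos]
  have hinj : Set.InjOn f ↑(Finset.Icc 1 N) := by
    intro a ha b hb hab
    simp only [Finset.coe_Icc, Set.mem_Icc] at ha hb
    simp only [hf, Complex.ofReal_inj] at hab
    have h2c : (2:ℝ) * c ≠ 0 := by simpa using hc0
    have hcos := mul_left_cancel₀ h2c hab
    have hπ := Real.pi_pos
    have := Real.injOn_cos (hbound a ha.2) (hbound b hb.2) hcos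
    field_simp at this
    exact_mod_cast this
  set F : Finset ℂ := (Finset.Icc 1 N).image f with hF
  have cardF : F.card = N := by
    rw [hF, Finset.card_image_of_injOn hinj, Nat.card_Icc]
    omega
  have hPne : T.charpoly ≠ 0 := (Matrix.charpoly_monic T).ne_zero
  have hdeg : T.charpoly.natDegree = N := by
    rw [Matrix.charpoly_natDegree_eq_dim, Fintype.card_fin]
  set R : Finset ℂ := T.charpoly.roots.toFinset with hR
  have cardR : R.card ≤ N :=
    le_trans (Multiset.toFinset_card_le _) (le_trans (Polynomial.card_roots' _) hdeg.le)
  have hFR : F ⊆ R := by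
    intro x hx
    rw [hF, Finset.mem_image] at hx
    obtain ⟨m, hm, rfl⟩ := hx
    rw [Finset.mem_Icc] at hm
    have := hmem m ⟨hm.1, hm.2⟩
    rw [specroot] at this
    rw [hR, Multiset.mem_toFinset, Polynomial.mem_roots hPne]
    exact this
  have hRF : F = R := Finset.eq_of_subset_of_card_le hFR (cardF ▸ cardR)
  ext μ
  rw [specroot]
  constructor
  · intro hroot
    have : μ ∈ R := by rw [hR, Multiset.mem_toFinset, Polynomial.mem_roots hPne]; exact hroot
    rw [← hRF, hF, Finset.mem_image] at this
    obtain ⟨m, hm, rfl⟩ := this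
    rw [Finset.mem_Icc] at hm
    exact ⟨m, ⟨hm.1, hm.2⟩, rfl⟩
  · rintro ⟨m, hm, rfl⟩
    exact (specroot _).mp (hmem m hm)

/-- The open-boundary Hatano-Nelson matrix (`|J_s| > |g|`) is similar, via the
diagonal matrix `S = diag(r, r², …, r^N)` with `r = √(|J_s−g|/|J_s+g|)`, to the
real symmetric tridiagonal matrix with off-diagonal entries
`sgn(J_s)√(J_s²−g²)`; hence its eigenvalues are real, equal to
`2 sgn(J_s)√(J_s²−g²) cos(mπ/(N+1))`, `m = 1,…,N`. -/
theorem hatano_nelson_obc_spectrum (N : ℕ) (Js g : ℝ) (h : |g| < |Js|)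
    (H : Matrix (Fin N) (Fin N) ℂ)
    (hH : ∀ i j : Fin N, H i j =
      if (j : ℕ) = (i : ℕ) + 1 then (Js + g : ℂ)
      else if (i : ℕ) = (j : ℕ) + 1 then (Js - g : ℂ) else 0)
    (r : ℝ) (hr : r = Real.sqrt (|Js - g| / |Js + g|))
    (c : ℝ) (hc : c = Real.sign Js * Real.sqrt (Js ^ 2 - g ^ 2))
    (S : Matrix (Fin N) (Fin N) ℂ)
    (hS : S = Matrix.diagonal fun i : Fin N => (r : ℂ) ^ ((i : ℕ) + 1)) :
    S⁻¹ * H * S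
        = Matrix.of (fun i j : Fin N =>
            if (j : ℕ) = (i : ℕ) + 1 ∨ (i : ℕ) = (j : ℕ) + 1 then (c : ℂ) else 0)
      ∧ spectrum ℂ H
        = (fun m : ℕ => ((2 * c * Real.cos (m * Real.pi / (N + 1)) : ℝ) : ℂ))
            '' Set.Icc 1 N := by
  -- real-number key facts
  obtain ⟨hr0, hk1, hk2, hc0⟩ : 0 < r ∧ (Js + g) * r = c ∧ Js - g = c * r ∧ c ≠ 0 := by
    have habs := abs_lt.mp h
    have hJ : Js ≠ 0 := by intro h0; rw [h0, abs_zero] at h; exact absurd (abs_nonneg g) (not_le.mpr h)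
    have key : ∀ a b : ℝ, 0 < a → 0 < b →
        a * Real.sqrt (b / a) = Real.sqrt (a * b) ∧ Real.sqrt (a*b) * Real.sqrt (b/a) = b := by
      intro a b ha hb
      constructor
      · rw [show a * b = a^2 * (b/a) by field_simp, Real.sqrt_mul (sq_nonneg a),
          Real.sqrt_sq ha.le]
      · rw [← Real.sqrt_mul (by positivity), show a*b*(b/a) = b^2 by field_simp,
          Real.sqrt_sq hb.le]
    rcases lt_or_gt_of_ne hJ with hneg | hpos
    · have ha : Js + g < 0 := by cases abs_cases Js <;> linarith
      have hb : Js - g < 0 := by cases abs_cases Js <;> linarith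
      have h1 : |Js - g| / |Js + g| = (-(Js-g)) / (-(Js+g)) := by
        rw [abs_of_neg ha, abs_of_neg hb]
      have hsq : Js ^ 2 - g ^ 2 = (-(Js+g)) * (-(Js-g)) := by ring
      obtain ⟨k1, k2⟩ := key (-(Js+g)) (-(Js-g)) (by linarith) (by linarith)
      have hsign : Real.sign Js = -1 := Real.sign_of_neg hneg
      have hr0 : 0 < r := by rw [hr, h1]; exact Real.sqrt_pos.mpr (div_pos (by linarith) (by linarith))
      refine ⟨hr0, ?_, ?_, ?_⟩
      · rw [hr, h1, hc, hsign, hsq]; nlinarith [k1]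
      · rw [hc, hsign, hsq, hr, h1]; nlinarith [k2]
      · rw [hc, hsign, hsq]
        have : 0 < Real.sqrt ((-(Js+g)) * (-(Js-g))) := Real.sqrt_pos.mpr (by nlinarith)
        nlinarith
    · have ha : 0 < Js + g := by cases abs_cases Js <;> linarith
      have hb : 0 < Js - g := by cases abs_cases Js <;> linarith
      have h1 : |Js - g| / |Js + g| = (Js-g) / (Js+g) := by
        rw [abs_of_pos ha, abs_of_pos hb]
      have hsq : Js ^ 2 - g ^ 2 = (Js+g) * (Js-g) := by ring
      obtain ⟨k1, k2⟩ := key (Js+g) (Js-g) ha hb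
      have hsign : Real.sign Js = 1 := Real.sign_of_pos hpos
      have hr0 : 0 < r := by rw [hr, h1]; exact Real.sqrt_pos.mpr (div_pos (by linarith) (by linarith))
      refine ⟨hr0, ?_, ?_, ?_⟩
      · rw [hr, h1, hc, hsign, hsq]; linarith [k1]
      · rw [hc, hsign, hsq, hr, h1]; linarith [k2]
      · rw [hc, hsign, hsq]
        have : 0 < Real.sqrt ((Js+g) * (Js-g)) := Real.sqrt_pos.mpr (by nlinarith)
        linarith
  -- the similarity computation
  have hrC : (r : ℂ) ≠ 0 := by exact_mod_cast hr0.ne'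
  have part1 : S⁻¹ * H * S = Matrix.of (fun i j : Fin N =>
      if (j : ℕ) = (i : ℕ) + 1 ∨ (i : ℕ) = (j : ℕ) + 1 then (c : ℂ) else 0) := by
    have hk1C : ((Js : ℂ) + g) * r = c := by exact_mod_cast congrArg Complex.ofReal hk1
    have hk2C : (Js : ℂ) - g = (c : ℂ) * r := by exact_mod_cast congrArg Complex.ofReal hk2
    have hSinv : S⁻¹ = Matrix.diagonal fun i : Fin N => ((r : ℂ) ^ ((i : ℕ) + 1))⁻¹ := by
      rw [hS]
      apply Matrix.inv_eq_left_inv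
      rw [Matrix.diagonal_mul_diagonal, ← Matrix.diagonal_one]
      funext i
      field_simp
    ext i j
    rw [hSinv, hS, Matrix.mul_diagonal, Matrix.diagonal_mul, hH i j, Matrix.of_apply]
    by_cases h1 : (j : ℕ) = (i : ℕ) + 1
    · rw [if_pos h1, if_pos (Or.inl h1)]
      have hp : ((r : ℂ)) ^ ((j : ℕ) + 1) = (r : ℂ) ^ ((i : ℕ) + 1) * r := by
        rw [h1, pow_succ]
      rw [hp, show ((r:ℂ) ^ ((i:ℕ)+1))⁻¹ * ((Js:ℂ)+g) * ((r:ℂ) ^ ((i:ℕ)+1) * r) =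
        ((Js:ℂ)+g) * r * (((r:ℂ) ^ ((i:ℕ)+1))⁻¹ * (r:ℂ) ^ ((i:ℕ)+1)) from by ring,
        inv_mul_cancel₀ (pow_ne_zero _ hrC), mul_one, hk1C]
    · rw [if_neg h1]
      by_cases h2 : (i : ℕ) = (j : ℕ) + 1
      · rw [if_pos h2, if_pos (Or.inr h2)]
        have hp : ((r : ℂ)) ^ ((i : ℕ) + 1) = (r : ℂ) ^ ((j : ℕ) + 1) * r := by
          rw [h2, pow_succ]
        rw [hp, hk2C, show ((r:ℂ) ^ ((j:ℕ)+1) * r)⁻¹ * ((c:ℂ) * r) * (r:ℂ) ^ ((j:ℕ)+1) =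
          (c:ℂ) * (((r:ℂ) ^ ((j:ℕ)+1) * r)⁻¹ * ((r:ℂ) ^ ((j:ℕ)+1) * r)) from by ring,
          inv_mul_cancel₀ (mul_ne_zero (pow_ne_zero _ hrC) hrC), mul_one]
      · rw [if_neg h2, if_neg (by tauto)]
        ring
  refine ⟨part1, ?_⟩
  have hUnit : IsUnit S := by
    rw [Matrix.isUnit_iff_isUnit_det, hS, Matrix.det_diagonal, isUnit_iff_ne_zero]
    exact Finset.prod_ne_zero_iff.mpr fun i _ => pow_ne_zero _ hrC
  obtain ⟨u, hu⟩ := hUnit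
  have hSinv : S⁻¹ = ↑u⁻¹ := by rw [← hu]; exact (Matrix.coe_units_inv u).symm
  have hspec : spectrum ℂ H = spectrum ℂ (S⁻¹ * H * S) := by
    rw [hSinv, ← hu]
    exact (spectrum.units_conjugate' (a := H) (u := u)).symm
  rw [hspec, part1]
  exact hn_tridiag_spectrum N c hc0
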